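/- Lemma (Compactness of the solution operator): In the two-norm Setting with Assumptions (A4) and (A5), define T : Y* → Y by T(g) = j(S((g∘j)|_{X₀})), i.e. T(g) is the image under j of the unique minimizer in X₀ of F^{g∘j}. Then T maps weakly convergent sequences to norm-convergent sequences: if g_n converges weakly to g in Y*, then ‖T(g_n) − T(g)‖_Y → 0. -/

import Mathlib

open Filter Topology
open scoped Classical

set_option maxHeartbeats 1000000
set_option synthInstance.maxHeartbeats 1000000
open TopologicalSpace NormedSpace

/-- A continuous linear functional vanishes on a submodule on which it is bounded above. -/
lemma vanish_on_submodule {E : Type*} [NormedAddCommGroup E] [NormedSpace ℝ E]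
    (Z : Submodule ℝ E) (f : E →L[ℝ] ℝ) (u : ℝ) (h : ∀ a ∈ (Z : Set E), f a < u)
    {z : E} (hz : z ∈ Z) : f z = 0 := by
  by_contra hfz
  have ht := h (((u + 1) / f z) • z) (Z.smul_mem _ hz)
  rw [map_smul] at ht
  simp only [smul_eq_mul, div_mul_cancel₀ _ hfz] at ht
  linarith

/-- Closed subspace of a reflexive space is reflexive. -/
lemma subspace_reflexive {X : Type*} [NormedAddCommGroup X] [NormedSpace ℝ X]
    (hXrefl : Function.Surjective (inclusionInDoubleDual ℝ X))
    (Z : Submodule ℝ X) (hZc : IsClosed (Z : Set X)) :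
    Function.Surjective (inclusionInDoubleDual ℝ ↥Z) := by
  set R : (X →L[ℝ] ℝ) →L[ℝ] (↥Z →L[ℝ] ℝ) :=
    (ContinuousLinearMap.compL ℝ ↥Z X ℝ).flip Z.subtypeL with hR
  intro Φ
  obtain ⟨x₀, hx₀⟩ := hXrefl (Φ.comp R)
  have hx₀Z : x₀ ∈ Z := by
    by_contra h
    obtain ⟨f, u, hf1, hf2⟩ := geometric_hahn_banach_closed_point Z.convex hZc h
    have hRf : R f = 0 := by
      ext z
      exact vanish_on_submodule Z f u hf1 z.2
    have h1 : (Φ.comp R) f = 0 := by simp [hRf]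
    have h2 : (Φ.comp R) f = f x₀ := by rw [← hx₀]; rfl
    have h0 : (0:ℝ) < u := by simpa using hf1 0 Z.zero_mem
    rw [h1] at h2; linarith
  refine ⟨⟨x₀, hx₀Z⟩, ?_⟩
  ext g
  obtain ⟨g', hg', -⟩ := exists_extension_norm_eq (𝕜 := ℝ) Z g
  have hRg' : R g' = g := by ext z; exact hg' z
  calc inclusionInDoubleDual ℝ ↥Z ⟨x₀, hx₀Z⟩ g = g ⟨x₀, hx₀Z⟩ := rfl
    _ = g' x₀ := (hg' ⟨x₀, hx₀Z⟩).symm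
    _ = (Φ.comp R) g' := by rw [← hx₀]; rfl
    _ = Φ g := by rw [ContinuousLinearMap.comp_apply, hRg']

/-- If a space is reflexive and separable, its dual is separable. -/
lemma dual_separable {Z : Type*} [NormedAddCommGroup Z] [NormedSpace ℝ Z]
    (hZrefl : Function.Surjective (inclusionInDoubleDual ℝ Z))
    [SeparableSpace Z] : SeparableSpace (Z →L[ℝ] ℝ) := by
  have : Nonempty Z := ⟨0⟩
  obtain ⟨d, hd⟩ := exists_dense_seq Z
  have hgex : ∀ i, ∃ g : Z →L[ℝ] ℝ, d i ≠ 0 → (‖g‖ = 1 ∧ g (d i) = ‖d i‖) := by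
    intro i
    by_cases h : d i = 0
    · exact ⟨0, fun h' => absurd h h'⟩
    · obtain ⟨g, hg1, hg2⟩ := exists_dual_vector ℝ (d i) (norm_ne_zero_iff.mpr h)
      exact ⟨g, fun _ => ⟨hg1, by exact_mod_cast hg2⟩⟩
  choose g hg using hgex
  set s : Submodule ℝ (Z →L[ℝ] ℝ) := (Submodule.span ℝ (Set.range g)).topologicalClosure with hs
  have hsc : IsClosed (s : Set (Z →L[ℝ] ℝ)) := Submodule.isClosed_topologicalClosure _
  have hdense : Dense (s : Set (Z →L[ℝ] ℝ)) := by
    by_contra hnd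
    have : ∃ g₀, g₀ ∉ s := by
      by_contra hall
      push_neg at hall
      exact hnd (by rw [dense_iff_closure_eq, hsc.closure_eq]; ext y; simpa using hall y)
    obtain ⟨g₀, hg₀⟩ := this
    obtain ⟨Φ, u, hf1, hf2⟩ := geometric_hahn_banach_closed_point s.convex hsc hg₀
    obtain ⟨w, hw⟩ := hZrefl Φ
    have h0 : (0:ℝ) < u := by simpa using hf1 0 s.zero_mem
    have hwne : w ≠ 0 := by
      intro h
      have : Φ g₀ = 0 := by rw [← hw, h]; simp
      linarith
    have hgi0 : ∀ i, g i w = 0 := by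
      intro i
      have hmem : g i ∈ s :=
        (Submodule.le_topologicalClosure _) (Submodule.subset_span ⟨i, rfl⟩)
      have : Φ (g i) = 0 := vanish_on_submodule s Φ u hf1 hmem
      rw [← hw] at this
      exact this
    have hwpos : (0:ℝ) < ‖w‖ := norm_pos_iff.mpr hwne
    obtain ⟨i, hi⟩ := hd.exists_dist_lt w (by positivity : (0:ℝ) < ‖w‖/2)
    rw [dist_eq_norm] at hi
    have hrev : ‖w - d i‖ = ‖d i - w‖ := norm_sub_rev _ _
    have hdi : ‖w‖/2 < ‖d i‖ := by
      have := norm_sub_norm_le w (d i)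
      linarith
    have hdine : d i ≠ 0 := by intro h; rw [h, norm_zero] at hdi; linarith
    obtain ⟨hg1, hg2⟩ := hg i hdine
    have : ‖d i‖ = g i (d i - w) := by rw [map_sub, hgi0, sub_zero, hg2]
    have hle : g i (d i - w) ≤ ‖d i - w‖ := by
      calc g i (d i - w) ≤ |g i (d i - w)| := le_abs_self _
        _ ≤ ‖g i‖ * ‖d i - w‖ := (g i).le_opNorm _
        _ = ‖d i - w‖ := by rw [hg1, one_mul]
    linarith
  have h1 : IsSeparable ((Submodule.span ℝ (Set.range g) : Submodule ℝ (Z →L[ℝ] ℝ)) : Set (Z →L[ℝ] ℝ)) :=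
    (Set.countable_range g).isSeparable.span (R := ℝ) (M := Z →L[ℝ] ℝ)
  have h2 : IsSeparable (s : Set (Z →L[ℝ] ℝ)) := by
    rw [hs, Submodule.topologicalClosure_coe]
    exact h1.closure
  exact isSeparable_univ_iff.mp (hdense.closure_eq ▸ h2.closure)

/-- Bounded sequences in a reflexive space have weakly convergent subsequences. -/
lemma weak_seq_compact {X : Type*} [NormedAddCommGroup X] [NormedSpace ℝ X]
    (hXrefl : Function.Surjective (inclusionInDoubleDual ℝ X))
    (x : ℕ → X) (C : ℝ) (hx : ∀ k, ‖x k‖ ≤ C) :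
    ∃ φ : ℕ → ℕ, StrictMono φ ∧ ∃ z : X,
      ∀ f : X →L[ℝ] ℝ, Tendsto (fun l => f (x (φ l))) atTop (𝓝 (f z)) := by
  have hC0 : (0:ℝ) ≤ C := le_trans (norm_nonneg _) (hx 0)
  set Z : Submodule ℝ X := (Submodule.span ℝ (Set.range x)).topologicalClosure with hZ
  have hZc : IsClosed (Z : Set X) := Submodule.isClosed_topologicalClosure _
  haveI : SeparableSpace ↥Z := by
    have : IsSeparable (Z : Set X) := by
      rw [hZ, Submodule.topologicalClosure_coe]
      exact ((Set.countable_range x).isSeparable.span).closure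
    exact this.separableSpace
  have hZrefl := subspace_reflexive hXrefl Z hZc
  haveI : SeparableSpace (↥Z →L[ℝ] ℝ) := dual_separable hZrefl
  haveI : Nonempty (↥Z →L[ℝ] ℝ) := ⟨0⟩
  obtain ⟨G, hG⟩ := exists_dense_seq (↥Z →L[ℝ] ℝ)
  have hxZ : ∀ k, x k ∈ Z :=
    fun k => (Submodule.le_topologicalClosure _) (Submodule.subset_span ⟨k, rfl⟩)
  set xz : ℕ → ↥Z := fun k => ⟨x k, hxZ k⟩ with hxz
  have hxznorm : ∀ k, ‖xz k‖ ≤ C := fun k => hx k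
  -- extract a subsequence converging against every G m, via compactness of a countable product
  set s : Set (ℕ → ℝ) := Set.univ.pi (fun m => Set.Icc (-(‖G m‖*C)) (‖G m‖*C)) with hs
  have hsc : IsCompact s := isCompact_univ_pi fun m => isCompact_Icc
  have hmem : ∀ k, (fun m => G m (xz k)) ∈ s := by
    intro k
    rw [Set.mem_univ_pi]
    intro m
    rw [Set.mem_Icc, ← abs_le]
    exact (G m).le_opNorm_of_le (hxznorm k)
  obtain ⟨c, -, φ, hφ, hconv⟩ := hsc.isSeqCompact hmem
  have hptwise : ∀ m, Tendsto (fun l => G m (xz (φ l))) atTop (𝓝 (c m)) := by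
    rw [tendsto_pi_nhds] at hconv
    exact fun m => hconv m
  -- Cauchyness against every functional on Z
  have hcauchy : ∀ g : ↥Z →L[ℝ] ℝ, CauchySeq (fun l => g (xz (φ l))) := by
    intro g
    rw [Metric.cauchySeq_iff]
    intro ε hε
    have hδ : (0:ℝ) < ε/(4*(C+1)) := by positivity
    obtain ⟨m, hm0⟩ := hG.exists_dist_lt g hδ
    have hm : ‖g - G m‖ < ε/(4*(C+1)) := by
      rw [show dist g (G m) = ‖g - G m‖ from dist_eq_norm g (G m)] at hm0
      exact hm0
    obtain ⟨N, hN⟩ := (Metric.cauchySeq_iff.mp (hptwise m).cauchySeq) (ε/2) (by positivity)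
    refine ⟨N, fun a ha b hb => ?_⟩
    have key : ∀ l, |g (xz (φ l)) - G m (xz (φ l))| ≤ ε/4 := by
      intro l
      calc |g (xz (φ l)) - G m (xz (φ l))| = |(g - G m) (xz (φ l))| := by
            rw [ContinuousLinearMap.sub_apply]
        _ ≤ ‖g - G m‖ * C := (g - G m).le_opNorm_of_le (hxznorm _)
        _ ≤ (ε/(4*(C+1))) * C := by
            exact mul_le_mul_of_nonneg_right (le_of_lt hm) hC0
        _ ≤ ε/4 := by rw [div_mul_eq_mul_div, div_le_div_iff₀ (by positivity) (by norm_num)]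
                      nlinarith
    have hd := hN a ha b hb
    rw [Real.dist_eq] at *
    calc |g (xz (φ a)) - g (xz (φ b))| ≤
        |g (xz (φ a)) - G m (xz (φ a))| + |G m (xz (φ a)) - G m (xz (φ b))|
          + |G m (xz (φ b)) - g (xz (φ b))| := by
            have := abs_sub_le (g (xz (φ a))) (G m (xz (φ a))) (g (xz (φ b)))
            have := abs_sub_le (G m (xz (φ a))) (G m (xz (φ b))) (g (xz (φ b)))
            linarith
      _ < ε/4 + ε/2 + ε/4 := by
            have h1 := key a
            have h2 := key b
            rw [abs_sub_comm] at h2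
            linarith
      _ = ε := by ring
  -- limits exist for every f : X* and define an element of X**
  have hlim : ∀ f : X →L[ℝ] ℝ, ∃ rr : ℝ, Tendsto (fun l => f (x (φ l))) atTop (𝓝 rr) := by
    intro f
    have : CauchySeq (fun l => (f.comp Z.subtypeL) (xz (φ l))) := hcauchy _
    obtain ⟨rr, hrr⟩ := cauchySeq_tendsto_of_complete this
    exact ⟨rr, hrr⟩
  choose r hr using hlim
  have hmap_add : ∀ f₁ f₂ : X →L[ℝ] ℝ, r (f₁ + f₂) = r f₁ + r f₂ := by
    intro f₁ f₂
    refine tendsto_nhds_unique (hr (f₁ + f₂)) ?_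
    simpa using (hr f₁).add (hr f₂)
  have hmap_smul : ∀ (a : ℝ) (f : X →L[ℝ] ℝ), r (a • f) = a * r f := by
    intro a f
    refine tendsto_nhds_unique (hr (a • f)) ?_
    simpa using (hr f).const_mul a
  have hbound : ∀ f : X →L[ℝ] ℝ, ‖r f‖ ≤ C * ‖f‖ := by
    intro f
    have h1 : Tendsto (fun l => |f (x (φ l))|) atTop (𝓝 |r f|) := (hr f).abs
    rw [Real.norm_eq_abs]
    refine le_of_tendsto h1 (Eventually.of_forall fun l => ?_)
    calc |f (x (φ l))| ≤ ‖f‖ * ‖x (φ l)‖ := f.le_opNorm _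
      _ ≤ ‖f‖ * C := mul_le_mul_of_nonneg_left (hx _) (norm_nonneg _)
      _ = C * ‖f‖ := mul_comm _ _
  set Llin : (X →L[ℝ] ℝ) →ₗ[ℝ] ℝ :=
    { toFun := r, map_add' := hmap_add, map_smul' := hmap_smul } with hLlin
  set L : (X →L[ℝ] ℝ) →L[ℝ] ℝ := LinearMap.mkContinuous Llin C hbound with hL
  obtain ⟨z, hz⟩ := hXrefl L
  refine ⟨φ, hφ, z, fun f => ?_⟩
  have h1 : f z = r f := congrFun (congrArg DFunLike.coe hz) f
  rw [h1]
  exact hr f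

/-- Weak convergence of a sequence in a normed space: convergence tested against
every continuous linear functional. -/
def WeakTendsto {X : Type*} [NormedAddCommGroup X] [NormedSpace ℝ X]
    (u : ℕ → X) (x : X) : Prop :=
  ∀ φ : X →L[ℝ] ℝ, Tendsto (fun n => φ (u n)) atTop (𝓝 (φ x))

/-- **Compactness of the solution operator.**
In the two-norm Deep Ritz setting with Assumptions (A4) and (A5), the operator
`T : Y* → Y`, `T g = j (S ((g ∘ j)|_{X₀}))`, maps weakly convergent sequences in
`Y*` to norm-convergent sequences in `Y`. -/
theorem deep_ritz_solution_operator_compact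
    {X B Y : Type*} [NormedAddCommGroup X] [NormedSpace ℝ X] [CompleteSpace X]
    [NormedAddCommGroup B] [NormedSpace ℝ B] [CompleteSpace B]
    [NormedAddCommGroup Y] [NormedSpace ℝ Y] [CompleteSpace Y]
    (hXrefl : Function.Surjective (NormedSpace.inclusionInDoubleDual ℝ X))
    (hBrefl : Function.Surjective (NormedSpace.inclusionInDoubleDual ℝ B))
    (hYrefl : Function.Surjective (NormedSpace.inclusionInDoubleDual ℝ Y))
    (γ : X →L[ℝ] B)
    (E : X → ℝ)
    -- E is bounded from below
    (hEbdd : ∃ m : ℝ, ∀ x : X, m ≤ E x)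
    -- E is (sequentially) lower semicontinuous w.r.t. the weak topology of X
    (hElsc : ∀ (x : X) (u : ℕ → X), WeakTendsto u x →
      ((E x : EReal)) ≤ liminf (fun n => ((E (u n) : EReal))) atTop)
    -- E is continuous w.r.t. the norm topology of X
    (hEcont : Continuous E)
    (p : ℝ) (hp : 1 < p)
    (lam : ℕ → ℝ) (hlam_pos : ∀ n, 0 < lam n) (hlam : Tendsto lam atTop atTop)
    (A : ℕ → Set X)
    -- the limit functionals with right-hand side f
    (F : (X →L[ℝ] ℝ) → X → EReal)
    (hF : ∀ (f : X →L[ℝ] ℝ) (x : X),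
      F f x = if γ x = 0 then ((E x - f x : ℝ) : EReal) else ⊤)
    -- the second norm, encoded by an injective dense-range embedding j : X → Y
    (j : X →L[ℝ] Y) (hj_inj : Function.Injective j) (hj_dense : DenseRange j)
    -- Assumption (A4): j is completely continuous
    (hA4 : ∀ (u : ℕ → X) (x : X), WeakTendsto u x →
      Tendsto (fun n => j (u n)) atTop (𝓝 (j x)))
    -- Assumption (A5): unique minimizers and a demi-continuous solution map S
    (S : (↥(LinearMap.ker (γ : X →ₗ[ℝ] B)) →L[ℝ] ℝ) → ↥(LinearMap.ker (γ : X →ₗ[ℝ] B)))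
    (hS_min : ∀ (f : X →L[ℝ] ℝ) (z : X),
      F f ((S (f.comp (LinearMap.ker (γ : X →ₗ[ℝ] B)).subtypeL) : X)) ≤ F f z)
    (hS_uniq : ∀ (f : X →L[ℝ] ℝ) (y : X), γ y = 0 →
      (∀ z : X, F f y ≤ F f z) → y = (S (f.comp (LinearMap.ker (γ : X →ₗ[ℝ] B)).subtypeL) : X))
    (hS_demi : ∀ (φ : ℕ → (↥(LinearMap.ker (γ : X →ₗ[ℝ] B)) →L[ℝ] ℝ))
      (φ₀ : ↥(LinearMap.ker (γ : X →ₗ[ℝ] B)) →L[ℝ] ℝ), Tendsto φ atTop (𝓝 φ₀) →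
      ∀ ψ : ↥(LinearMap.ker (γ : X →ₗ[ℝ] B)) →L[ℝ] ℝ,
        Tendsto (fun n => ψ (S (φ n))) atTop (𝓝 (ψ (S φ₀)))) :
    -- T maps weakly convergent sequences to norm-convergent ones
    ∀ (g : ℕ → (Y →L[ℝ] ℝ)) (g₀ : Y →L[ℝ] ℝ),
      (∀ y : Y, Tendsto (fun n => g n y) atTop (𝓝 (g₀ y))) →
      Tendsto (fun n =>
          ‖j ((S (((g n).comp j).comp (LinearMap.ker (γ : X →ₗ[ℝ] B)).subtypeL) : X)) -
            j ((S ((g₀.comp j).comp (LinearMap.ker (γ : X →ₗ[ℝ] B)).subtypeL) : X))‖)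
        atTop (𝓝 0) := by
  intro g g₀ hg
  -- the difference sequence tends to zero pointwise on Y
  have hgy : ∀ y : Y, Tendsto (fun n => ‖(g n - g₀) y‖) atTop (𝓝 0) := by
    intro y
    have h1 : Tendsto (fun n => g n y - g₀ y) atTop (𝓝 0) := by
      simpa using (hg y).sub_const (g₀ y)
    simpa using h1.norm
  -- uniform bound via Banach–Steinhaus
  obtain ⟨C', hC'⟩ : ∃ C', ∀ n, ‖g n - g₀‖ ≤ C' := by
    apply banach_steinhaus
    intro y
    have hb : BddAbove (Set.range fun n => ‖(g n - g₀) y‖) := (hgy y).bddAbove_range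
    obtain ⟨C, hC⟩ := hb
    exact ⟨C, fun n => hC ⟨n, rfl⟩⟩
  have hC'0 : 0 ≤ C' := le_trans (norm_nonneg _) (hC' 0)
  -- Key step: the adjoint of j maps the weakly null sequence to a norm-null one
  have key : Tendsto (fun n => ‖(g n - g₀).comp j‖) atTop (𝓝 0) := by
    by_contra hk
    have hnn : ∀ n, (0:ℝ) ≤ ‖(g n - g₀).comp j‖ := fun n => norm_nonneg _
    rw [Metric.tendsto_atTop] at hk
    push_neg at hk
    obtain ⟨ε, hε, hfreq⟩ := hk
    have hfreq' : ∀ N, ∃ n ≥ N, ε ≤ ‖(g n - g₀).comp j‖ := by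
      intro N
      obtain ⟨n, hn1, hn2⟩ := hfreq N
      refine ⟨n, hn1, ?_⟩
      rwa [Real.dist_eq, sub_zero, abs_of_nonneg (hnn n)] at hn2
    obtain ⟨ψ, hψ, hψ2⟩ :=
      Filter.extraction_of_frequently_atTop (Filter.frequently_atTop.mpr hfreq')
    have hx : ∀ k, ∃ x : X, ‖x‖ < 1 ∧ ε/2 < ‖((g (ψ k) - g₀).comp j) x‖ := by
      intro k
      exact ContinuousLinearMap.exists_lt_apply_of_lt_opNorm _
        (lt_of_lt_of_le (by linarith) (hψ2 k))
    choose xseq hx1 hx2 using hx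
    obtain ⟨φ, hφ, z, hz⟩ := weak_seq_compact hXrefl xseq 1 (fun k => le_of_lt (hx1 k))
    have hjconv : Tendsto (fun l => j (xseq (φ l))) atTop (𝓝 (j z)) :=
      hA4 (fun l => xseq (φ l)) z (fun Φ => hz Φ)
    have hjnorm : Tendsto (fun l => ‖j (xseq (φ l)) - j z‖) atTop (𝓝 0) :=
      tendsto_iff_norm_sub_tendsto_zero.mp hjconv
    have hpt : Tendsto (fun l => ‖(g (ψ (φ l)) - g₀) (j z)‖) atTop (𝓝 0) :=
      (hgy (j z)).comp ((hψ.comp hφ).tendsto_atTop)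
    have hub : Tendsto
        (fun l => C' * ‖j (xseq (φ l)) - j z‖ + ‖(g (ψ (φ l)) - g₀) (j z)‖) atTop (𝓝 0) := by
      have := (hjnorm.const_mul C').add hpt
      simpa using this
    have hle : ∀ l, ε/2 ≤ C' * ‖j (xseq (φ l)) - j z‖ + ‖(g (ψ (φ l)) - g₀) (j z)‖ := by
      intro l
      have h2 : ε/2 < ‖(g (ψ (φ l)) - g₀) (j (xseq (φ l)))‖ := by
        simpa using hx2 (φ l)
      have h3 : ‖(g (ψ (φ l)) - g₀) (j (xseq (φ l)))‖ ≤
          ‖(g (ψ (φ l)) - g₀) (j (xseq (φ l))) - (g (ψ (φ l)) - g₀) (j z)‖ +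
            ‖(g (ψ (φ l)) - g₀) (j z)‖ := by
        have := norm_add_le ((g (ψ (φ l)) - g₀) (j (xseq (φ l))) - (g (ψ (φ l)) - g₀) (j z))
          ((g (ψ (φ l)) - g₀) (j z))
        simpa using this
      have h4 : ‖(g (ψ (φ l)) - g₀) (j (xseq (φ l))) - (g (ψ (φ l)) - g₀) (j z)‖ ≤
          C' * ‖j (xseq (φ l)) - j z‖ := by
        rw [← map_sub]
        calc ‖(g (ψ (φ l)) - g₀) (j (xseq (φ l)) - j z)‖
            ≤ ‖g (ψ (φ l)) - g₀‖ * ‖j (xseq (φ l)) - j z‖ := (g (ψ (φ l)) - g₀).le_opNorm _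
          _ ≤ C' * ‖j (xseq (φ l)) - j z‖ :=
              mul_le_mul_of_nonneg_right (hC' (ψ (φ l))) (norm_nonneg _)
      linarith
    have hcontr : ε/2 ≤ (0:ℝ) := ge_of_tendsto hub (Eventually.of_forall hle)
    linarith
  -- Step 3: norm convergence of the restricted functionals
  set Φf : ℕ → (↥(LinearMap.ker (γ : X →ₗ[ℝ] B)) →L[ℝ] ℝ) :=
    fun n => ((g n).comp j).comp (LinearMap.ker (γ : X →ₗ[ℝ] B)).subtypeL with hΦf
  set Φ₀ : ↥(LinearMap.ker (γ : X →ₗ[ℝ] B)) →L[ℝ] ℝ := (g₀.comp j).comp (LinearMap.ker (γ : X →ₗ[ℝ] B)).subtypeL with hΦ₀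
  have hΦconv : Tendsto Φf atTop (𝓝 Φ₀) := by
    refine (tendsto_iff_norm_sub_tendsto_zero (E := ↥(LinearMap.ker (γ : X →ₗ[ℝ] B)) →L[ℝ] ℝ)).mpr ?_
    have hbound : ∀ n, ‖Φf n - Φ₀‖ ≤ ‖(g n - g₀).comp j‖ := by
      intro n
      have heq : Φf n - Φ₀ = ((g n - g₀).comp j).comp (LinearMap.ker (γ : X →ₗ[ℝ] B)).subtypeL := by
        ext v
        simp [hΦf, hΦ₀]
      rw [heq]
      calc ‖((g n - g₀).comp j).comp (LinearMap.ker (γ : X →ₗ[ℝ] B)).subtypeL‖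
          ≤ ‖(g n - g₀).comp j‖ * ‖(LinearMap.ker (γ : X →ₗ[ℝ] B)).subtypeL‖ :=
            ContinuousLinearMap.opNorm_comp_le _ _
        _ ≤ ‖(g n - g₀).comp j‖ * 1 :=
            mul_le_mul_of_nonneg_left (Submodule.norm_subtypeL_le _) (norm_nonneg _)
        _ = ‖(g n - g₀).comp j‖ := mul_one _
    exact squeeze_zero (fun n => norm_nonneg (Φf n - Φ₀)) hbound key
  -- Step 4: demi-continuity of S, then complete continuity of j
  have hweak : ∀ Φ : X →L[ℝ] ℝ,
      Tendsto (fun n => Φ ((S (Φf n) : X))) atTop (𝓝 (Φ ((S Φ₀ : X)))) := by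
    intro Φ
    exact hS_demi Φf Φ₀ hΦconv (Φ.comp (LinearMap.ker (γ : X →ₗ[ℝ] B)).subtypeL)
  have hjS : Tendsto (fun n => j ((S (Φf n) : X))) atTop (𝓝 (j ((S Φ₀ : X)))) :=
    hA4 (fun n => (S (Φf n) : X)) ((S Φ₀ : X)) hweak
  exact tendsto_iff_norm_sub_tendsto_zero.mp hjS
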